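/- Let B1, B2 be I-crystals with 0 ∈ I, let σ : B1 ⊗ B2 → B2 ⊗ B1 be an isomorphism of I-crystals, and let H : B1 ⊗ B2 → ℤ be a local energy function with respect to σ. Let b1 ∈ B1, b2 ∈ B2 with σ(b1 ⊗ b2) = b̃2 ⊗ b̃1, and let j_1, …, j_ℓ ∈ I be a sequence with e_{j_ℓ} ⋯ e_{j_1}(b1 ⊗ b2) ≠ 0. Suppose e_{j_ℓ} ⋯ e_{j_1}(b1 ⊗ b2) = e_{i'_{ℓ−k}} ⋯ e_{i'_1} b1 ⊗ e_{i_k} ⋯ e_{i_1} b2 and e_{j_ℓ} ⋯ e_{j_1}(b̃2 ⊗ b̃1) = e_{ĩ_m} ⋯ e_{ĩ_1} b̃2 ⊗ e_{ĩ'_{ℓ−m}} ⋯ e_{ĩ'_1} b̃1, where the sequences (i_q), (i'_q), (ĩ_q), (ĩ'_q) record, in order, on which tensor factor each operator e_{j_q} acts according to the tensor-product rule (so {j_1,…,j_ℓ} = {i_1,…,i_k} ⊔ {i'_1,…,i'_{ℓ−k}} = {ĩ_1,…,ĩ_m} ⊔ {ĩ'_1,…,ĩ'_{ℓ−m}} as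 multisets). Then H(e_{j_ℓ} ⋯ e_{j_1}(b1 ⊗ b2)) − H(b1 ⊗ b2) = #{1 ≤ q ≤ m : ĩ_q = 0} − #{1 ≤ q ≤ k : i_q = 0}. -/

import Mathlib

/-- An `I`-crystal on a carrier `B`: raising/lowering operators `e i, f i : B → B ⊔ {0}`
(encoded via `Option B`), mutually inverse where defined, with all strings finite. -/
structure Crystal (I : Type*) (B : Type*) where
  e : I → B → Option B
  f : I → B → Option B
  ef : ∀ (i : I) (b b' : B), e i b = some b' → f i b' = some b
  fe : ∀ (i : I) (b b' : B), f i b = some b' → e i b' = some b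
  e_bounded : ∀ (i : I) (b : B), ∃ k : ℕ, (fun o => o.bind (e i))^[k] (some b) = none
  f_bounded : ∀ (i : I) (b : B), ∃ k : ℕ, (fun o => o.bind (f i))^[k] (some b) = none

/-- The largest `k` such that `e^k b ≠ 0`, for a partial map `e : B → B ⊔ {0}`. -/
noncomputable def epsOf {B : Type*} (e : B → Option B) (b : B) : ℕ :=
  sSup {k : ℕ | (fun o => o.bind e)^[k] (some b) ≠ none}

/-- `ε_i(b) = max {k ≥ 0 | e_i^k b ≠ 0}`. -/
noncomputable def Crystal.eps {I B : Type*} (c : Crystal I B) (i : I) (b : B) : ℕ :=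
  epsOf (c.e i) b

/-- `φ_i(b) = max {k ≥ 0 | f_i^k b ≠ 0}`. -/
noncomputable def Crystal.phi {I B : Type*} (c : Crystal I B) (i : I) (b : B) : ℕ :=
  epsOf (c.f i) b

/-- The raising operators of the tensor product crystal `B1 ⊗ B2`. -/
noncomputable def tensorE {I B1 B2 : Type*} (c1 : Crystal I B1) (c2 : Crystal I B2)
    (i : I) (p : B1 × B2) : Option (B1 × B2) :=
  if c2.eps i p.2 ≤ c1.phi i p.1 then (c1.e i p.1).map (fun x => (x, p.2))
  else (c2.e i p.2).map (fun x => (p.1, x))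

/-- The lowering operators of the tensor product crystal `B1 ⊗ B2`. -/
noncomputable def tensorF {I B1 B2 : Type*} (c1 : Crystal I B1) (c2 : Crystal I B2)
    (i : I) (p : B1 × B2) : Option (B1 × B2) :=
  if c2.eps i p.2 < c1.phi i p.1 then (c1.f i p.1).map (fun x => (x, p.2))
  else (c2.f i p.2).map (fun x => (p.1, x))

/-- `e_i` acts on the first tensor factor of `p = a ⊗ b` iff `φ_i(a) ≥ ε_i(b)`. -/
def actsLeft {I A B : Type*} (cA : Crystal I A) (cB : Crystal I B) (i : I) (p : A × B) : Prop :=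
  cB.eps i p.2 ≤ cA.phi i p.1

noncomputable instance {I A B : Type*} (cA : Crystal I A) (cB : Crystal I B) (i : I)
    (p : A × B) : Decidable (actsLeft cA cB i p) :=
  inferInstanceAs (Decidable (cB.eps i p.2 ≤ cA.phi i p.1))

/-- `σ : B1 ⊗ B2 → B2 ⊗ B1` is an isomorphism of `I`-crystals: a bijection commuting with
all `e_i` and `f_i` (sending `0` to `0`). -/
structure IsCrystalIso {I B1 B2 : Type*} (c1 : Crystal I B1) (c2 : Crystal I B2)
    (σ : B1 × B2 → B2 × B1) : Prop where
  bij : Function.Bijective σ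
  comm_e : ∀ (i : I) (p : B1 × B2), Option.map σ (tensorE c1 c2 i p) = tensorE c2 c1 i (σ p)
  comm_f : ∀ (i : I) (p : B1 × B2), Option.map σ (tensorF c1 c2 i p) = tensorF c2 c1 i (σ p)

/-- `H : B1 ⊗ B2 → ℤ` is a local energy function with respect to `σ`: it is unchanged by
`e_i` for `i ≠ 0`, and changes by `+1` (resp. `−1`, resp. `0`) under `e_0` according to
whether `e_0` acts on the left (resp. right, resp. mixed) factors of `x` and `σ(x)`. -/
structure IsLocalEnergy {I B1 B2 : Type*} (i0 : I) (c1 : Crystal I B1) (c2 : Crystal I B2)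
    (σ : B1 × B2 → B2 × B1) (H : B1 × B2 → ℤ) : Prop where
  ne_zero : ∀ (i : I), i ≠ i0 → ∀ (x y : B1 × B2), tensorE c1 c2 i x = some y → H y = H x
  zero_LL : ∀ (x y : B1 × B2), tensorE c1 c2 i0 x = some y →
    actsLeft c1 c2 i0 x → actsLeft c2 c1 i0 (σ x) → H y = H x + 1
  zero_RR : ∀ (x y : B1 × B2), tensorE c1 c2 i0 x = some y →
    ¬ actsLeft c1 c2 i0 x → ¬ actsLeft c2 c1 i0 (σ x) → H y = H x - 1
  zero_mixed : ∀ (x y : B1 × B2), tensorE c1 c2 i0 x = some y →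
    ¬ (actsLeft c1 c2 i0 x ↔ actsLeft c2 c1 i0 (σ x)) → H y = H x

/-- Apply a sequence of operators `e_{j_1}, …, e_{j_ℓ}` (in this order) to `x`. -/
def applyList {I X : Type*} (step : I → X → Option X) (J : List I) (x : X) : Option X :=
  J.foldl (fun o j => o.bind (step j)) (some x)

/-- Along the application of `e_{j_1}, …, e_{j_ℓ}` to `p ∈ A ⊗ B`, count the steps with
`j_q = i0` that act on the first factor (if `onFirst = true`) resp. on the second factor
(if `onFirst = false`), following the tensor-product rule. -/
noncomputable def zeroCount {I A B : Type*} [DecidableEq I] (cA : Crystal I A)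
    (cB : Crystal I B) (i0 : I) (onFirst : Bool) : List I → A × B → ℕ
  | [], _ => 0
  | j :: J, p =>
      (if j = i0 ∧ (actsLeft cA cB j p ↔ onFirst = true) then 1 else 0) +
        (tensorE cA cB j p).elim 0 (zeroCount cA cB i0 onFirst J)

theorem local_energy_count_aux {I B1 B2 : Type*} [DecidableEq I] (i0 : I)
    (c1 : Crystal I B1) (c2 : Crystal I B2) (σ : B1 × B2 → B2 × B1)
    (hσ : IsCrystalIso c1 c2 σ) (H : B1 × B2 → ℤ) (hH : IsLocalEnergy i0 c1 c2 σ H)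
    (J : List I) : ∀ (p y : B1 × B2),
    applyList (tensorE c1 c2) J p = some y →
    H y - H p =
      (zeroCount c2 c1 i0 true J (σ p) : ℤ)
        - (zeroCount c1 c2 i0 false J p : ℤ) := by
  induction J with
  | nil =>
    intro p y hy
    simp [applyList] at hy
    subst hy
    simp [zeroCount]
  | cons j J ih =>
    intro p y hy
    have hy' : (applyList (tensorE c1 c2) J) =
      fun o => (J.foldl (fun o j => o.bind (tensorE c1 c2 j)) (some o) : Option (B1 × B2)) := rfl
    rcases hq : tensorE c1 c2 j p with _ | q
    · exfalso
      have hnone : ∀ (L : List I),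
          L.foldl (fun o j => o.bind (tensorE c1 c2 j)) none = none := by
        intro L
        induction L with
        | nil => rfl
        | cons a L ihL => simpa using ihL
      have : applyList (tensorE c1 c2) (j :: J) p = none := by
        simp only [applyList, List.foldl_cons, Option.bind_some, hq]
        exact hnone J
      rw [this] at hy
      cases hy
    · have hstep : applyList (tensorE c1 c2) J q = some y := by
        simpa [applyList, hq] using hy
      have hσq : tensorE c2 c1 j (σ p) = some (σ q) := by
        have := hσ.comm_e j p
        rw [hq] at this
        simpa using this.symm
      have ihq := ih q y hstep
      have hz1 : zeroCount c2 c1 i0 true (j :: J) (σ p) =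
          (if j = i0 ∧ actsLeft c2 c1 j (σ p) then 1 else 0) +
            zeroCount c2 c1 i0 true J (σ q) := by
        simp [zeroCount, hσq]
      have hz2 : zeroCount c1 c2 i0 false (j :: J) p =
          (if j = i0 ∧ ¬ actsLeft c1 c2 j p then 1 else 0) +
            zeroCount c1 c2 i0 false J q := by
        simp [zeroCount, hq]
      have hHsteps : H q - H p =
          ((if j = i0 ∧ actsLeft c2 c1 j (σ p) then 1 else 0 : ℤ)
            - (if j = i0 ∧ ¬ actsLeft c1 c2 j p then 1 else 0 : ℤ)) := by
        by_cases hj : j = i0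
        · subst hj
          by_cases hL : actsLeft c1 c2 j p <;> by_cases hR : actsLeft c2 c1 j (σ p)
          · rw [hH.zero_LL p q hq hL hR]; simp [hL, hR]
          · rw [hH.zero_mixed p q hq (by tauto)]; simp [hL, hR]
          · rw [hH.zero_mixed p q hq (by tauto)]; simp [hL, hR]
          · rw [hH.zero_RR p q hq hL hR]; simp [hL, hR]
        · rw [hH.ne_zero j hj p q hq]; simp [hj]
      rw [hz1, hz2]
      push_cast
      linarith

/-- if `e_{j_ℓ} ⋯ e_{j_1}(b1 ⊗ b2) = y ≠ 0`, then
`H(y) − H(b1 ⊗ b2) = #{q | ĩ_q = 0} − #{q | i_q = 0}`, where the `i_q` (resp. `ĩ_q`) are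
the operators among `j_1, …, j_ℓ` acting on the `b2`-factor of `b1 ⊗ b2` (resp. on the
`b̃2`-factor of `σ(b1 ⊗ b2) = b̃2 ⊗ b̃1`) according to the tensor-product rule. -/
theorem local_energy_count {I B1 B2 : Type*} [DecidableEq I] (i0 : I)
    (c1 : Crystal I B1) (c2 : Crystal I B2) (σ : B1 × B2 → B2 × B1)
    (hσ : IsCrystalIso c1 c2 σ) (H : B1 × B2 → ℤ) (hH : IsLocalEnergy i0 c1 c2 σ H)
    (b1 : B1) (b2 : B2) (J : List I) (y : B1 × B2)
    (hy : applyList (tensorE c1 c2) J (b1, b2) = some y) :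
    H y - H (b1, b2) =
      (zeroCount c2 c1 i0 true J (σ (b1, b2)) : ℤ)
        - (zeroCount c1 c2 i0 false J (b1, b2) : ℤ) :=
  local_energy_count_aux i0 c1 c2 σ hσ H hH J (b1, b2) y hy
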